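/- Let (A,H,▶,ρ) be a linked pair of bialgebras where A and H are *-Hopf algebras, and let γ: H → A be γ(x) = ε(x)1. Then the condition ∑γ(x₂*)(x₃*▶(x₁▶a)*) = a*γ(x*) (for all a ∈ A, x ∈ H) is equivalent to the condition (x▶a)* = S⁻¹(x*)▶a* (for all a ∈ A, x ∈ H). -/

import Mathlib

open scoped TensorProduct
open Coalgebra

noncomputable section

/-- A Sweedler representation of the comultiplication of `x`:
`Δ x = ∑ᵢ x1 i ⊗ x2 i`. -/
def Rep2 {H : Type} [AddCommGroup H] [Module ℂ H] [Coalgebra ℂ H]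
    {ι : Type} (x : H) (s : Finset ι) (x1 x2 : ι → H) : Prop :=
  Coalgebra.comul (R := ℂ) x = ∑ i ∈ s, x1 i ⊗ₜ[ℂ] x2 i

/-- A representation of an element of a tensor product as a finite sum of pure tensors. -/
def TRep {M N : Type} [AddCommGroup M] [Module ℂ M] [AddCommGroup N] [Module ℂ N]
    {ι : Type} (w : M ⊗[ℂ] N) (s : Finset ι) (p : ι → M) (q : ι → N) : Prop :=
  w = ∑ i ∈ s, p i ⊗ₜ[ℂ] q i

/-- The iterated comultiplication `x ↦ ∑ (x₁ ⊗ x₂) ⊗ x₃`. -/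
def comul3 (H : Type) [AddCommGroup H] [Module ℂ H] [Coalgebra ℂ H] :
    H →ₗ[ℂ] (H ⊗[ℂ] H) ⊗[ℂ] H :=
  (LinearMap.rTensor H (Coalgebra.comul (R := ℂ))) ∘ₗ Coalgebra.comul (R := ℂ)

/-- The iterated comultiplication with four output legs. -/
def comul4 (H : Type) [AddCommGroup H] [Module ℂ H] [Coalgebra ℂ H] :
    H →ₗ[ℂ] ((H ⊗[ℂ] H) ⊗[ℂ] H) ⊗[ℂ] H :=
  (LinearMap.rTensor H (comul3 H)) ∘ₗ Coalgebra.comul (R := ℂ)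

/-- The iterated comultiplication with five output legs. -/
def comul5 (H : Type) [AddCommGroup H] [Module ℂ H] [Coalgebra ℂ H] :
    H →ₗ[ℂ] (((H ⊗[ℂ] H) ⊗[ℂ] H) ⊗[ℂ] H) ⊗[ℂ] H :=
  (LinearMap.rTensor H (comul4 H)) ∘ₗ Coalgebra.comul (R := ℂ)

/-- The iterated comultiplication with six output legs. -/
def comul6 (H : Type) [AddCommGroup H] [Module ℂ H] [Coalgebra ℂ H] :
    H →ₗ[ℂ] ((((H ⊗[ℂ] H) ⊗[ℂ] H) ⊗[ℂ] H) ⊗[ℂ] H) ⊗[ℂ] H :=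
  (LinearMap.rTensor H (comul5 H)) ∘ₗ Coalgebra.comul (R := ℂ)

/-- A `*`-structure on a Hopf algebra over `ℂ`: a conjugate-linear involution which is
antimultiplicative and comultiplicative.  Together with the Hopf algebra this is the data of
a `*`-Hopf algebra. -/
structure StarHopf (H : Type) [Ring H] [HopfAlgebra ℂ H] : Type where
  st : H → H
  st_add : ∀ x y : H, st (x + y) = st x + st y
  st_smul : ∀ (c : ℂ) (x : H), st (c • x) = (starRingEnd ℂ) c • st x
  st_invol : ∀ x : H, st (st x) = x
  st_antimul : ∀ x y : H, st (x * y) = st y * st x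
  st_comul : ∀ (x : H) {ι : Type} (s : Finset ι) (x1 x2 : ι → H),
      Rep2 x s x1 x2 →
      Coalgebra.comul (R := ℂ) (st x) = ∑ i ∈ s, st (x1 i) ⊗ₜ[ℂ] st (x2 i)

/-- A right comodule over a Hopf algebra. -/
structure RightComodule (H : Type) [Ring H] [HopfAlgebra ℂ H]
    (V : Type) [AddCommGroup V] [Module ℂ V] : Type where
  ρ : V →ₗ[ℂ] V ⊗[ℂ] H
  counit_cond : ∀ v : V, (TensorProduct.rid ℂ V)
      ((LinearMap.lTensor V (Coalgebra.counit (R := ℂ))) (ρ v)) = v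
  coassoc_cond : ∀ v : V, (LinearMap.rTensor H ρ) (ρ v)
      = (TensorProduct.assoc ℂ V H H).symm
          ((LinearMap.lTensor V (Coalgebra.comul (R := ℂ))) (ρ v))

/-- An inner product: sesquilinear (linear in the first variable), conjugate-symmetric and
positive definite. -/
structure IsInner {V : Type} [AddCommGroup V] [Module ℂ V] (ip : V → V → ℂ) : Prop where
  add_left : ∀ u u' v : V, ip (u + u') v = ip u v + ip u' v
  smul_left : ∀ (c : ℂ) (u v : V), ip (c • u) v = c * ip u v
  conj_symm : ∀ u v : V, ip v u = (starRingEnd ℂ) (ip u v)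
  pos_def : ∀ v : V, v ≠ 0 → 0 < (ip v v).re

/-- The invariance condition `∑ ⟨u₀,v⟩ S(u₁) = ∑ ⟨u,v₀⟩ v₁*` for a sesquilinear form on a
right comodule. -/
def RInvariant {H : Type} [Ring H] [HopfAlgebra ℂ H] (σ : StarHopf H)
    {V : Type} [AddCommGroup V] [Module ℂ V] (c : RightComodule H V)
    (ip : V → V → ℂ) : Prop :=
  ∀ (u v : V) {ι κ : Type} (s : Finset ι) (t : Finset κ)
    (u0 : ι → V) (u1 : ι → H) (v0 : κ → V) (v1 : κ → H),
    TRep (c.ρ u) s u0 u1 → TRep (c.ρ v) t v0 v1 →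
    ∑ i ∈ s, ip (u0 i) v • (HopfAlgebra.antipode (R := ℂ) (u1 i))
      = ∑ j ∈ t, ip u (v0 j) • σ.st (v1 j)

/-- A compact quantum group: a `*`-Hopf algebra such that every right comodule admits an
invariant inner product. -/
def IsCQG (H : Type) [Ring H] [HopfAlgebra ℂ H] (σ : StarHopf H) : Prop :=
  ∀ (V : Type) [AddCommGroup V] [Module ℂ V] (c : RightComodule H V),
    ∃ ip : V → V → ℂ, IsInner ip ∧ RInvariant σ c ip

/-- `φ` is a normal integral on the Hopf algebra `H` (a two-sided integral with `φ(1) = 1`);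
a Hopf algebra is cosemisimple iff it admits a normal integral. -/
def IsNormalIntegral (H : Type) [Ring H] [HopfAlgebra ℂ H] (φ : H →ₗ[ℂ] ℂ) : Prop :=
  φ 1 = 1 ∧
  (∀ (x : H) {ι : Type} (s : Finset ι) (x1 x2 : ι → H), Rep2 x s x1 x2 →
      ∑ i ∈ s, φ (x1 i) • x2 i = φ x • (1 : H)) ∧
  (∀ (x : H) {ι : Type} (s : Finset ι) (x1 x2 : ι → H), Rep2 x s x1 x2 →
      ∑ i ∈ s, φ (x2 i) • x1 i = φ x • (1 : H))

section LinkedPair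

variable (A H : Type) [Ring A] [HopfAlgebra ℂ A] [Ring H] [HopfAlgebra ℂ H]

/-- A linked pair of bialgebras `(A, H, ▶, ρ)` (a cocycle linked pair with trivial cocycle
and cococycle): `A` is a left `H`-module algebra via `tri x a = x ▶ a`, `H` is a right
`A`-comodule coalgebra via `rho = ρ : H → H ⊗ A`, and the compatibility relations hold. -/
structure IsLinkedPair
    (tri : H →ₗ[ℂ] A →ₗ[ℂ] A) (rho : H →ₗ[ℂ] H ⊗[ℂ] A) : Prop where
  -- `A` is a left `H`-module algebra
  tri_one_act : ∀ a : A, tri 1 a = a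
  tri_mul_act : ∀ (x y : H) (a : A), tri (x * y) a = tri x (tri y a)
  tri_one : ∀ x : H, tri x 1 = Coalgebra.counit (R := ℂ) x • (1 : A)
  tri_mul : ∀ (x : H) (a b : A) {ι : Type} (s : Finset ι) (x1 x2 : ι → H),
      Rep2 x s x1 x2 → tri x (a * b) = ∑ i ∈ s, tri (x1 i) a * tri (x2 i) b
  -- `H` is a right `A`-comodule coalgebra
  rho_counit : ∀ (x : H) {ι : Type} (s : Finset ι) (h : ι → H) (c : ι → A),
      TRep (rho x) s h c →
      ∑ i ∈ s, Coalgebra.counit (R := ℂ) (h i) • c i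
        = Coalgebra.counit (R := ℂ) x • (1 : A)
  rho_comul : ∀ (x : H) {ι : Type} (s : Finset ι) (g k : ι → H) (c d : ι → A),
      (TensorProduct.map rho rho) (Coalgebra.comul (R := ℂ) x)
        = ∑ i ∈ s, (g i ⊗ₜ[ℂ] c i) ⊗ₜ[ℂ] (k i ⊗ₜ[ℂ] d i) →
      (LinearMap.rTensor A (Coalgebra.comul (R := ℂ))) (rho x)
        = ∑ i ∈ s, (g i ⊗ₜ[ℂ] k i) ⊗ₜ[ℂ] (c i * d i)
  rho_id : ∀ (x : H) {ι : Type} (s : Finset ι) (h : ι → H) (c : ι → A),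
      TRep (rho x) s h c → ∑ i ∈ s, Coalgebra.counit (R := ℂ) (c i) • h i = x
  rho_coassoc : ∀ x : H,
      (TensorProduct.assoc ℂ H A A) ((LinearMap.rTensor A rho) (rho x))
        = (LinearMap.lTensor H (Coalgebra.comul (R := ℂ) : A →ₗ[ℂ] A ⊗[ℂ] A)) (rho x)
  -- the compatibility relations
  compat_counit : ∀ (x : H) (a : A), Coalgebra.counit (R := ℂ) (tri x a)
      = Coalgebra.counit (R := ℂ) x * Coalgebra.counit (R := ℂ) a
  compat_one : rho 1 = (1 : H) ⊗ₜ[ℂ] (1 : A)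
  compat_comul : ∀ (x : H) (a : A) {ι κ : Type} (s : Finset ι) (t : Finset κ)
      (a1 a2 : ι → A) (g : κ → H) (c : κ → A) (u : κ → H),
      Rep2 a s a1 a2 →
      (TensorProduct.map rho (LinearMap.id : H →ₗ[ℂ] H)) (Coalgebra.comul (R := ℂ) x)
        = ∑ j ∈ t, (g j ⊗ₜ[ℂ] c j) ⊗ₜ[ℂ] u j →
      Coalgebra.comul (R := ℂ) (tri x a)
        = ∑ j ∈ t, ∑ i ∈ s, tri (g j) (a1 i) ⊗ₜ[ℂ] (c j * tri (u j) (a2 i))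
  compat_rho_mul : ∀ (x y : H) {ι κ : Type} (s : Finset ι) (t : Finset κ)
      (g : ι → H) (c : ι → A) (u : ι → H) (k : κ → H) (d : κ → A),
      (TensorProduct.map rho (LinearMap.id : H →ₗ[ℂ] H)) (Coalgebra.comul (R := ℂ) x)
        = ∑ i ∈ s, (g i ⊗ₜ[ℂ] c i) ⊗ₜ[ℂ] u i →
      TRep (rho y) t k d →
      rho (x * y) = ∑ i ∈ s, ∑ j ∈ t, (g i * k j) ⊗ₜ[ℂ] (c i * tri (u i) (d j))
  compat_sym : ∀ (x : H) (a : A) {ι κ : Type} (s : Finset ι) (t : Finset κ)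
      (x1 : ι → H) (h : ι → H) (b : ι → A)
      (g : κ → H) (c : κ → A) (x2 : κ → H),
      (LinearMap.lTensor H rho) (Coalgebra.comul (R := ℂ) x)
        = ∑ i ∈ s, x1 i ⊗ₜ[ℂ] (h i ⊗ₜ[ℂ] b i) →
      (LinearMap.rTensor H rho) (Coalgebra.comul (R := ℂ) x)
        = ∑ j ∈ t, (g j ⊗ₜ[ℂ] c j) ⊗ₜ[ℂ] x2 j →
      ∑ i ∈ s, h i ⊗ₜ[ℂ] (tri (x1 i) a * b i)
        = ∑ j ∈ t, g j ⊗ₜ[ℂ] (c j * tri (x2 j) a)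

/-- `M`, identified with `A ⊗ H` via `e`, carries the Hopf algebra structure of the bismash
product `A # H` of the linked pair `(A, H, ▶, ρ)`. -/
structure IsBismash
    (tri : H →ₗ[ℂ] A →ₗ[ℂ] A) (rho : H →ₗ[ℂ] H ⊗[ℂ] A)
    (M : Type) [Ring M] [HopfAlgebra ℂ M] (e : A ⊗[ℂ] H ≃ₗ[ℂ] M) : Prop where
  mul_def : ∀ (a b : A) (x y : H) {ι : Type} (s : Finset ι) (x1 x2 : ι → H),
      Rep2 x s x1 x2 →
      e (a ⊗ₜ[ℂ] x) * e (b ⊗ₜ[ℂ] y)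
        = ∑ i ∈ s, e ((a * tri (x1 i) b) ⊗ₜ[ℂ] (x2 i * y))
  one_def : (1 : M) = e ((1 : A) ⊗ₜ[ℂ] (1 : H))
  comul_def : ∀ (a : A) (x : H) {ι κ : Type} (s : Finset ι) (t : Finset κ)
      (a1 a2 : ι → A) (g : κ → H) (c : κ → A) (u : κ → H),
      Rep2 a s a1 a2 →
      (TensorProduct.map rho (LinearMap.id : H →ₗ[ℂ] H)) (Coalgebra.comul (R := ℂ) x)
        = ∑ j ∈ t, (g j ⊗ₜ[ℂ] c j) ⊗ₜ[ℂ] u j →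
      Coalgebra.comul (R := ℂ) (e (a ⊗ₜ[ℂ] x))
        = ∑ i ∈ s, ∑ j ∈ t, e (a1 i ⊗ₜ[ℂ] g j) ⊗ₜ[ℂ] e ((a2 i * c j) ⊗ₜ[ℂ] u j)
  counit_def : ∀ (a : A) (x : H),
      Coalgebra.counit (R := ℂ) (e (a ⊗ₜ[ℂ] x))
        = Coalgebra.counit (R := ℂ) a * Coalgebra.counit (R := ℂ) x

end LinkedPair

section MyAux

variable {M P : Type} [AddCommGroup M] [Module ℂ M] [AddCommGroup P] [Module ℂ P]

def triLift (f : M → M → M → P)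
    (ha1 : ∀ u u' v w, f (u + u') v w = f u v w + f u' v w)
    (hs1 : ∀ (c : ℂ) u v w, f (c • u) v w = c • f u v w)
    (ha2 : ∀ u v v' w, f u (v + v') w = f u v w + f u v' w)
    (hs2 : ∀ (c : ℂ) u v w, f u (c • v) w = c • f u v w)
    (ha3 : ∀ u v w w', f u v (w + w') = f u v w + f u v w')
    (hs3 : ∀ (c : ℂ) u v w, f u v (c • w) = c • f u v w) :
    M ⊗[ℂ] (M ⊗[ℂ] M) →ₗ[ℂ] P :=
  TensorProduct.lift
    { toFun := fun u => TensorProduct.lift (LinearMap.mk₂ ℂ (f u) (ha2 u)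
        (fun c v w => hs2 c u v w) (ha3 u) (fun c v w => hs3 c u v w))
      map_add' := by
        intro u u'
        apply TensorProduct.ext'
        intro v w
        simp [ha1]
      map_smul' := by
        intro c u
        apply TensorProduct.ext'
        intro v w
        simp [hs1] }

@[simp] lemma triLift_tmul (f : M → M → M → P) (ha1 hs1 ha2 hs2 ha3 hs3) (u v w : M) :
    triLift f ha1 hs1 ha2 hs2 ha3 hs3 (u ⊗ₜ[ℂ] (v ⊗ₜ[ℂ] w)) = f u v w := rfl

variable {H : Type} [AddCommGroup H] [Module ℂ H] [Coalgebra ℂ H]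

lemma sum_tri_coassoc (f : H → H → H → P)
    (ha1 : ∀ u u' v w, f (u + u') v w = f u v w + f u' v w)
    (hs1 : ∀ (c : ℂ) u v w, f (c • u) v w = c • f u v w)
    (ha2 : ∀ u v v' w, f u (v + v') w = f u v w + f u v' w)
    (hs2 : ∀ (c : ℂ) u v w, f u (c • v) w = c • f u v w)
    (ha3 : ∀ u v w w', f u v (w + w') = f u v w + f u v w')
    (hs3 : ∀ (c : ℂ) u v w, f u v (c • w) = c • f u v w)
    {x : H} {ι κ Λ : Type*} (r : Coalgebra.Repr ℂ x ι)
    (r1 : (i : r.ι) → Coalgebra.Repr ℂ (r.left i) κ)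
    (r2 : (i : r.ι) → Coalgebra.Repr ℂ (r.right i) Λ) :
    ∑ i ∈ r.index, ∑ j ∈ (r1 i).index, f ((r1 i).left j) ((r1 i).right j) (r.right i)
      = ∑ i ∈ r.index, ∑ j ∈ (r2 i).index, f (r.left i) ((r2 i).left j) ((r2 i).right j) := by
  have h := Coalgebra.sum_tmul_tmul_eq r r1 r2
  have h2 := congrArg (triLift f ha1 hs1 ha2 hs2 ha3 hs3) h
  simpa [map_sum] using h2

lemma sum_counit_smul_right {x : H} {ι : Type*} (r : Coalgebra.Repr ℂ x ι) :
    ∑ i ∈ r.index, Coalgebra.counit (R := ℂ) (r.left i) • r.right i = x := by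
  have h := Coalgebra.sum_counit_tmul_eq (R := ℂ) r
  have h2 := congrArg (TensorProduct.lid ℂ H) h
  simp only [map_sum, TensorProduct.lid_tmul] at h2
  simpa using h2

lemma sum_counit_smul_left {x : H} {ι : Type*} (r : Coalgebra.Repr ℂ x ι) :
    ∑ i ∈ r.index, Coalgebra.counit (R := ℂ) (r.right i) • r.left i = x := by
  have h := Coalgebra.sum_tmul_counit_eq (R := ℂ) r
  have h2 := congrArg (TensorProduct.rid ℂ H) h
  simp only [map_sum, TensorProduct.rid_tmul] at h2
  simpa using h2

section Anti
variable {A : Type} [Ring A] [HopfAlgebra ℂ A]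

local notation "S" => HopfAlgebra.antipode (R := ℂ)
local notation "ε" => Coalgebra.counit (R := ℂ)

lemma my_antipode_one : S (1 : A) = 1 := by
  have h := HopfAlgebra.mul_antipode_rTensor_comul_apply (R := ℂ) (1 : A)
  rw [Bialgebra.comul_one] at h
  simpa [Algebra.TensorProduct.one_def] using h

/-- a representation of `comul (a*b)` built from representations of `a` and `b`. -/
def reprMul {a b : A} {ι κ : Type*} (ra : Coalgebra.Repr ℂ a ι) (rb : Coalgebra.Repr ℂ b κ) :
    Coalgebra.Repr ℂ (a * b) (ι × κ) where
  index := ra.index ×ˢ rb.index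
  left := fun p => ra.left p.1 * rb.left p.2
  right := fun p => ra.right p.1 * rb.right p.2
  eq := by
    rw [Bialgebra.comul_mul, ← ra.eq, ← rb.eq, Finset.sum_mul_sum]
    rw [Finset.sum_product]
    simp [Algebra.TensorProduct.tmul_mul_tmul]

lemma claimI {x y : A} {ι κ : Type*} (rx : Coalgebra.Repr ℂ x ι) (ry : Coalgebra.Repr ℂ y κ) :
    ∑ i ∈ rx.index, ∑ j ∈ ry.index,
      S (rx.left i * ry.left j) * (rx.right i * ry.right j)
      = (ε x * ε y) • (1 : A) := by
  have h : ∑ p ∈ rx.index ×ˢ ry.index,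
      S (rx.left p.1 * ry.left p.2) * (rx.right p.1 * ry.right p.2)
      = Coalgebra.counit (R := ℂ) (x * y) • (1 : A) :=
    HopfAlgebra.sum_antipode_mul_eq_smul (R := ℂ) (reprMul rx ry)
  rw [Finset.sum_product, Bialgebra.counit_mul] at h
  exact h

lemma claimII {x y : A} {ι κ : Type*} (rx : Coalgebra.Repr ℂ x ι) (ry : Coalgebra.Repr ℂ y κ) :
    ∑ i ∈ rx.index, ∑ j ∈ ry.index,
      (rx.left i * ry.left j) * (S (ry.right j) * S (rx.right i))
      = (ε x * ε y) • (1 : A) := by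
  have hy := HopfAlgebra.sum_mul_antipode_eq_smul (R := ℂ) ry
  have hx := HopfAlgebra.sum_mul_antipode_eq_smul (R := ℂ) rx
  have step : ∀ i ∈ rx.index, ∑ j ∈ ry.index,
      (rx.left i * ry.left j) * (S (ry.right j) * S (rx.right i))
      = ε y • (rx.left i * S (rx.right i)) := by
    intro i _
    calc ∑ j ∈ ry.index, (rx.left i * ry.left j) * (S (ry.right j) * S (rx.right i))
        = ∑ j ∈ ry.index, rx.left i * ((ry.left j * S (ry.right j)) * S (rx.right i)) :=
          Finset.sum_congr rfl fun j _ => by simp [mul_assoc]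
      _ = rx.left i * ((∑ j ∈ ry.index, ry.left j * S (ry.right j)) * S (rx.right i)) := by
          rw [Finset.sum_mul, Finset.mul_sum]
      _ = ε y • (rx.left i * S (rx.right i)) := by
          rw [hy]; simp [smul_mul_assoc, mul_smul_comm]
  rw [Finset.sum_congr rfl step, ← Finset.smul_sum, hx, smul_smul, mul_comm]

theorem my_antipode_antimul (a b : A) : S (a * b) = S b * S a := by
  classical
  set ra := ℛ ℂ a with hra
  set rb := ℛ ℂ b with hrb
  set ra1 : (i : ra.ι) → Coalgebra.Repr ℂ (ra.left i) (A × A) := fun i => ℛ ℂ (ra.left i) with hra1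
  set ra2 : (i : ra.ι) → Coalgebra.Repr ℂ (ra.right i) (A × A) := fun i => ℛ ℂ (ra.right i) with hra2
  set rb1 : (j : rb.ι) → Coalgebra.Repr ℂ (rb.left j) (A × A) := fun j => ℛ ℂ (rb.left j) with hrb1
  set rb2 : (j : rb.ι) → Coalgebra.Repr ℂ (rb.right j) (A × A) := fun j => ℛ ℂ (rb.right j) with hrb2
  set F : A → A → A → A → A → A → A :=
    fun u1 u2 u3 v1 v2 v3 => S (u1 * v1) * ((u2 * v2) * (S v3 * S u3)) with hF
  -- Step E1
  have hSa : S a = ∑ i ∈ ra.index, ε (ra.left i) • S (ra.right i) := by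
    conv_lhs => rw [← sum_counit_smul_right ra]
    simp [map_sum]
  have hSb : S b = ∑ j ∈ rb.index, ε (rb.left j) • S (rb.right j) := by
    conv_lhs => rw [← sum_counit_smul_right rb]
    simp [map_sum]
  have E1 : S b * S a = ∑ i ∈ ra.index, ∑ j ∈ rb.index,
      (ε (ra.left i) * ε (rb.left j)) • (S (rb.right j) * S (ra.right i)) := by
    rw [hSa, hSb, Finset.sum_mul_sum, Finset.sum_comm]
    refine Finset.sum_congr rfl fun i _ => Finset.sum_congr rfl fun j _ => ?_
    rw [smul_mul_smul_comm, mul_comm (ε (rb.left j)) (ε (ra.left i))]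
  -- Step E2 : expand the scalar using claimI
  have E2 : ∀ (i : ra.ι) (j : rb.ι),
      (ε (ra.left i) * ε (rb.left j)) • (S (rb.right j) * S (ra.right i))
      = ∑ i' ∈ (ra1 i).index, ∑ j' ∈ (rb1 j).index,
          F ((ra1 i).left i') ((ra1 i).right i') (ra.right i)
            ((rb1 j).left j') ((rb1 j).right j') (rb.right j) := by
    intro i j
    have hc := claimI (ra1 i) (rb1 j)
    calc (ε (ra.left i) * ε (rb.left j)) • (S (rb.right j) * S (ra.right i))
        = ((ε (ra.left i) * ε (rb.left j)) • (1 : A)) * (S (rb.right j) * S (ra.right i)) := by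
          simp [smul_mul_assoc]
      _ = (∑ i' ∈ (ra1 i).index, ∑ j' ∈ (rb1 j).index,
            S ((ra1 i).left i' * (rb1 j).left j') * ((ra1 i).right i' * (rb1 j).right j'))
            * (S (rb.right j) * S (ra.right i)) := by rw [hc]
      _ = _ := by
          rw [Finset.sum_mul]
          refine Finset.sum_congr rfl fun i' _ => ?_
          rw [Finset.sum_mul]
          refine Finset.sum_congr rfl fun j' _ => ?_
          simp [hF, mul_assoc]
  -- the function with the `b`-sums folded in
  set G : A → A → A → A := fun u1 u2 u3 =>
    ∑ j ∈ rb.index, ∑ j' ∈ (rb1 j).index,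
      F u1 u2 u3 ((rb1 j).left j') ((rb1 j).right j') (rb.right j) with hG
  have Ga1 : ∀ u u' v w : A, G (u + u') v w = G u v w + G u' v w := by
    intro u u' v w
    simp [hG, hF, add_mul, map_add, Finset.sum_add_distrib]
  have Gs1 : ∀ (c : ℂ) (u v w : A), G (c • u) v w = c • G u v w := by
    intro c u v w
    simp [hG, hF, smul_mul_assoc, map_smul, Finset.smul_sum]
  have Ga2 : ∀ u v v' w : A, G u (v + v') w = G u v w + G u v' w := by
    intro u v v' w
    simp [hG, hF, add_mul, mul_add, Finset.sum_add_distrib]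
  have Gs2 : ∀ (c : ℂ) (u v w : A), G u (c • v) w = c • G u v w := by
    intro c u v w
    simp [hG, hF, smul_mul_assoc, mul_smul_comm, Finset.smul_sum]
  have Ga3 : ∀ u v w w' : A, G u v (w + w') = G u v w + G u v w' := by
    intro u v w w'
    simp [hG, hF, map_add, mul_add, Finset.sum_add_distrib]
  have Gs3 : ∀ (c : ℂ) (u v w : A), G u v (c • w) = c • G u v w := by
    intro c u v w
    simp [hG, hF, map_smul, mul_smul_comm, Finset.smul_sum]
  have E3 : S b * S a = ∑ i ∈ ra.index, ∑ i' ∈ (ra2 i).index,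
      G (ra.left i) ((ra2 i).left i') ((ra2 i).right i') := by
    rw [E1]
    rw [Finset.sum_congr rfl fun i _ => Finset.sum_congr rfl fun j _ => E2 i j]
    rw [← sum_tri_coassoc G Ga1 Gs1 Ga2 Gs2 Ga3 Gs3 ra ra1 ra2]
    exact Finset.sum_congr rfl fun i _ => Finset.sum_comm
  have E4 : ∀ (u1 u2 u3 : A), G u1 u2 u3 = ∑ j ∈ rb.index, ∑ j' ∈ (rb2 j).index,
      F u1 u2 u3 (rb.left j) ((rb2 j).left j') ((rb2 j).right j') := by
    intro u1 u2 u3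
    exact sum_tri_coassoc (fun v1 v2 v3 => F u1 u2 u3 v1 v2 v3)
      (by intro x x' v w; simp [hF, add_mul, mul_add, map_add])
      (by intro c x v w; simp [hF, smul_mul_assoc, mul_smul_comm])
      (by intro x v v' w; simp [hF, add_mul, mul_add, map_add])
      (by intro c x v w; simp [hF, smul_mul_assoc, mul_smul_comm])
      (by intro x v w w'; simp [hF, add_mul, mul_add, map_add])
      (by intro c x v w; simp [hF, smul_mul_assoc, mul_smul_comm, map_smul])
      rb rb1 rb2
  have E6 : ∀ (i : ra.ι) (j : rb.ι),
      ∑ i' ∈ (ra2 i).index, ∑ j' ∈ (rb2 j).index,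
        F (ra.left i) ((ra2 i).left i') ((ra2 i).right i')
          (rb.left j) ((rb2 j).left j') ((rb2 j).right j')
      = (ε (ra.right i) * ε (rb.right j)) • S (ra.left i * rb.left j) := by
    intro i j
    have hc := claimII (ra2 i) (rb2 j)
    calc ∑ i' ∈ (ra2 i).index, ∑ j' ∈ (rb2 j).index,
        F (ra.left i) ((ra2 i).left i') ((ra2 i).right i')
          (rb.left j) ((rb2 j).left j') ((rb2 j).right j')
        = S (ra.left i * rb.left j) *
            ∑ i' ∈ (ra2 i).index, ∑ j' ∈ (rb2 j).index,
              ((ra2 i).left i' * (rb2 j).left j') *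
                (S ((rb2 j).right j') * S ((ra2 i).right i')) := by
          rw [Finset.mul_sum]
          exact Finset.sum_congr rfl fun i' _ => by rw [Finset.mul_sum]
      _ = (ε (ra.right i) * ε (rb.right j)) • S (ra.left i * rb.left j) := by
          rw [hc, mul_smul_comm, mul_one]
  have E7 : S b * S a = ∑ i ∈ ra.index, ∑ j ∈ rb.index,
      (ε (ra.right i) * ε (rb.right j)) • S (ra.left i * rb.left j) := by
    rw [E3]
    rw [Finset.sum_congr rfl fun i _ => Finset.sum_congr rfl fun i' _ => E4 _ _ _]
    rw [Finset.sum_congr rfl fun i _ => Finset.sum_comm]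
    exact Finset.sum_congr rfl fun i _ => Finset.sum_congr rfl fun j _ => E6 i j
  rw [E7]
  have hab : a * b = ∑ i ∈ ra.index, ∑ j ∈ rb.index,
      (ε (ra.right i) * ε (rb.right j)) • (ra.left i * rb.left j) := by
    conv_lhs => rw [← sum_counit_smul_left ra, ← sum_counit_smul_left rb]
    rw [Finset.sum_mul_sum]
    exact Finset.sum_congr rfl fun i _ => Finset.sum_congr rfl fun j _ =>
      smul_mul_smul_comm _ _ _ _
  rw [hab]
  simp [map_sum, map_smul]

end Anti


section SinvAux
variable {A : Type} [Ring A] [HopfAlgebra ℂ A]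

local notation "S" => HopfAlgebra.antipode (R := ℂ)
local notation "ε" => Coalgebra.counit (R := ℂ)

variable (Sinv : A →ₗ[ℂ] A)

lemma sinv_one (h1 : ∀ x : A, Sinv (S x) = x) : Sinv (1 : A) = 1 := by
  have := h1 1
  rwa [my_antipode_one] at this

lemma sinv_antimul (h1 : ∀ x : A, Sinv (S x) = x) (h2 : ∀ x : A, S (Sinv x) = x) (x y : A) : Sinv (x * y) = Sinv y * Sinv x := by
  have hxy : x * y = S (Sinv y * Sinv x) := by
    rw [my_antipode_antimul, h2, h2]
  rw [hxy, h1]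

lemma sum_mul_sinv (h1 : ∀ x : A, Sinv (S x) = x) (h2 : ∀ x : A, S (Sinv x) = x) {y : A} {ι : Type*} (r : Coalgebra.Repr ℂ y ι) :
    ∑ i ∈ r.index, r.right i * Sinv (r.left i) = ε y • (1 : A) := by
  have key : ∀ u v : A, Sinv (u * S v) = v * Sinv u := by
    intro u v
    rw [sinv_antimul Sinv h1 h2, h1]
  calc ∑ i ∈ r.index, r.right i * Sinv (r.left i)
      = ∑ i ∈ r.index, Sinv (r.left i * S (r.right i)) :=
        Finset.sum_congr rfl fun i _ => (key _ _).symm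
    _ = Sinv (∑ i ∈ r.index, r.left i * S (r.right i)) := (map_sum Sinv _ _).symm
    _ = Sinv (ε y • (1 : A)) := by rw [HopfAlgebra.sum_mul_antipode_eq_smul r]
    _ = ε y • (1 : A) := by rw [map_smul, sinv_one Sinv h1]

lemma sum_sinv_mul (h1 : ∀ x : A, Sinv (S x) = x) (h2 : ∀ x : A, S (Sinv x) = x) {y : A} {ι : Type*} (r : Coalgebra.Repr ℂ y ι) :
    ∑ i ∈ r.index, Sinv (r.right i) * r.left i = ε y • (1 : A) := by
  have key : ∀ u v : A, Sinv (S u * v) = Sinv v * u := by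
    intro u v
    rw [sinv_antimul Sinv h1 h2, h1]
  calc ∑ i ∈ r.index, Sinv (r.right i) * r.left i
      = ∑ i ∈ r.index, Sinv (S (r.left i) * r.right i) :=
        Finset.sum_congr rfl fun i _ => (key _ _).symm
    _ = Sinv (∑ i ∈ r.index, S (r.left i) * r.right i) := (map_sum Sinv _ _).symm
    _ = Sinv (ε y • (1 : A)) := by rw [HopfAlgebra.sum_antipode_mul_eq_smul r]
    _ = ε y • (1 : A) := by rw [map_smul, sinv_one Sinv h1]

end SinvAux

lemma StarHopf.st_sum {H : Type} [Ring H] [HopfAlgebra ℂ H] (σ : StarHopf H)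
    {ι : Type*} (s : Finset ι) (f : ι → H) :
    σ.st (∑ i ∈ s, f i) = ∑ i ∈ s, σ.st (f i) := by
  classical
  have h0 : σ.st 0 = 0 := by
    have h := σ.st_smul 0 0
    simpa using h
  induction s using Finset.induction_on with
  | empty => simpa using h0
  | @insert a s ha ih => rw [Finset.sum_insert ha, Finset.sum_insert ha, σ.st_add, ih]

end MyAux

/-- Let `(A, H, ▶, ρ)` be a linked pair of bialgebras where `A` and `H` are
`*`-Hopf algebras, and let `γ(x) = ε(x) 1`.  Then the condition
`∑ γ(x₂*) (x₃* ▶ (x₁ ▶ a)*) = a* γ(x*)`, i.e. `∑ x₂* ▶ (x₁ ▶ a)* = ε(x*) a*`, is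
equivalent to the condition `(x ▶ a)* = S⁻¹(x*) ▶ a*`. -/
theorem linked_pair_star_action_iff
    {A H : Type} [Ring A] [HopfAlgebra ℂ A] [Ring H] [HopfAlgebra ℂ H]
    (tri : H →ₗ[ℂ] A →ₗ[ℂ] A) (rho : H →ₗ[ℂ] H ⊗[ℂ] A)
    (hlp : IsLinkedPair A H tri rho)
    (σA : StarHopf A) (σH : StarHopf H)
    (Sinv : H →ₗ[ℂ] H)
    (hSinv₁ : ∀ x : H, Sinv (HopfAlgebra.antipode (R := ℂ) x) = x)
    (hSinv₂ : ∀ x : H, HopfAlgebra.antipode (R := ℂ) (Sinv x) = x) :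
    (∀ (x : H) (a : A) {ι : Type} (s : Finset ι) (x1 x2 : ι → H),
        Rep2 x s x1 x2 →
        ∑ i ∈ s, tri (σH.st (x2 i)) (σA.st (tri (x1 i) a))
          = Coalgebra.counit (R := ℂ) (σH.st x) • σA.st a)
      ↔ (∀ (x : H) (a : A), σA.st (tri x a) = tri (Sinv (σH.st x)) (σA.st a)) := by
  
  classical
  constructor
  · -- condition (1) implies condition (2)
    intro h1 x a
    set r := ℛ ℂ x with hr
    set r1 : (i : r.ι) → Coalgebra.Repr ℂ (r.left i) (H × H) := fun i => ℛ ℂ (r.left i) with hr1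
    set r2 : (i : r.ι) → Coalgebra.Repr ℂ (r.right i) (H × H) := fun i => ℛ ℂ (r.right i) with hr2
    have hstx : Coalgebra.comul (R := ℂ) (σH.st x)
        = ∑ i ∈ r.index, σH.st (r.left i) ⊗ₜ[ℂ] σH.st (r.right i) :=
      σH.st_comul x r.index r.left r.right r.eq.symm
    have hone : ∑ i ∈ r.index,
        Coalgebra.counit (R := ℂ) (σH.st (r.left i)) • σH.st (r.right i) = σH.st x :=
      sum_counit_smul_right ⟨r.index, fun i => σH.st (r.left i),
        fun i => σH.st (r.right i), hstx.symm⟩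
    have htwo : ∑ i ∈ r.index,
        Coalgebra.counit (R := ℂ) (σH.st (r.right i)) • σH.st (r.left i) = σH.st x :=
      sum_counit_smul_left ⟨r.index, fun i => σH.st (r.left i),
        fun i => σH.st (r.right i), hstx.symm⟩
    set g : H → H → H → A := fun u v w =>
      σA.st (tri (Sinv (σH.st w) * σH.st v) (σA.st (tri u a))) with hg
    have ga1 : ∀ u u' v w : H, g (u + u') v w = g u v w + g u' v w := by
      intro u u' v w
      simp only [hg]
      simp [map_add, LinearMap.add_apply, σA.st_add, σH.st_add]
    have gs1 : ∀ (c : ℂ) (u v w : H), g (c • u) v w = c • g u v w := by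
      intro c u v w
      simp only [hg]
      simp [map_smul, LinearMap.smul_apply, σA.st_smul, σH.st_smul, Complex.conj_conj]
    have ga2 : ∀ u v v' w : H, g u (v + v') w = g u v w + g u v' w := by
      intro u v v' w
      simp only [hg]
      simp [σH.st_add, mul_add, map_add, LinearMap.add_apply, σA.st_add]
    have gs2 : ∀ (c : ℂ) (u v w : H), g u (c • v) w = c • g u v w := by
      intro c u v w
      simp only [hg]
      simp [σH.st_smul, mul_smul_comm, map_smul, LinearMap.smul_apply, σA.st_smul,
        Complex.conj_conj]
    have ga3 : ∀ u v w w' : H, g u v (w + w') = g u v w + g u v w' := by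
      intro u v w w'
      simp only [hg]
      simp [σH.st_add, map_add, add_mul, LinearMap.add_apply, σA.st_add]
    have gs3 : ∀ (c : ℂ) (u v w : H), g u v (c • w) = c • g u v w := by
      intro c u v w
      simp only [hg]
      simp [σH.st_smul, map_smul, smul_mul_assoc, LinearMap.smul_apply, σA.st_smul,
        Complex.conj_conj]
    have key1 : ∀ i, Coalgebra.counit (R := ℂ) (σH.st (r.left i)) • σA.st a
        = ∑ j ∈ (r1 i).index,
            tri (σH.st ((r1 i).right j)) (σA.st (tri ((r1 i).left j) a)) := by
      intro i
      exact (h1 (r.left i) a ((r1 i).index) (r1 i).left (r1 i).right ((r1 i).eq.symm)).symm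
    have chain : tri (Sinv (σH.st x)) (σA.st a) = σA.st (tri x a) := by
      calc tri (Sinv (σH.st x)) (σA.st a)
          = ∑ i ∈ r.index, Coalgebra.counit (R := ℂ) (σH.st (r.left i)) •
              tri (Sinv (σH.st (r.right i))) (σA.st a) := by
            conv_lhs => rw [← hone]
            rw [map_sum, map_sum, LinearMap.sum_apply]
            exact Finset.sum_congr rfl fun i _ => by
              rw [map_smul, map_smul, LinearMap.smul_apply]
        _ = ∑ i ∈ r.index, tri (Sinv (σH.st (r.right i)))
              (∑ j ∈ (r1 i).index,
                tri (σH.st ((r1 i).right j)) (σA.st (tri ((r1 i).left j) a))) := by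
            refine Finset.sum_congr rfl fun i _ => ?_
            rw [← key1 i, map_smul]
        _ = ∑ i ∈ r.index, ∑ j ∈ (r1 i).index,
              tri (Sinv (σH.st (r.right i)) * σH.st ((r1 i).right j))
                (σA.st (tri ((r1 i).left j) a)) := by
            refine Finset.sum_congr rfl fun i _ => ?_
            rw [map_sum]
            exact Finset.sum_congr rfl fun j _ => (hlp.tri_mul_act _ _ _).symm
        _ = ∑ i ∈ r.index, ∑ j ∈ (r1 i).index,
              σA.st (g ((r1 i).left j) ((r1 i).right j) (r.right i)) := by
            refine Finset.sum_congr rfl fun i _ => Finset.sum_congr rfl fun j _ => ?_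
            simp only [hg]
            rw [σA.st_invol]
        _ = σA.st (∑ i ∈ r.index, ∑ j ∈ (r1 i).index,
              g ((r1 i).left j) ((r1 i).right j) (r.right i)) := by
            rw [σA.st_sum]
            exact Finset.sum_congr rfl fun i _ => by rw [σA.st_sum]
        _ = σA.st (∑ i ∈ r.index, ∑ j ∈ (r2 i).index,
              g (r.left i) ((r2 i).left j) ((r2 i).right j)) := by
            rw [sum_tri_coassoc g ga1 gs1 ga2 gs2 ga3 gs3 r r1 r2]
        _ = ∑ i ∈ r.index, ∑ j ∈ (r2 i).index,
              tri (Sinv (σH.st ((r2 i).right j)) * σH.st ((r2 i).left j))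
                (σA.st (tri (r.left i) a)) := by
            rw [σA.st_sum]
            refine Finset.sum_congr rfl fun i _ => ?_
            rw [σA.st_sum]
            refine Finset.sum_congr rfl fun j _ => ?_
            simp only [hg]
            rw [σA.st_invol]
        _ = ∑ i ∈ r.index, Coalgebra.counit (R := ℂ) (σH.st (r.right i)) •
              σA.st (tri (r.left i) a) := by
            refine Finset.sum_congr rfl fun i _ => ?_
            have hrep2 : Coalgebra.comul (R := ℂ) (σH.st (r.right i))
                = ∑ j ∈ (r2 i).index, σH.st ((r2 i).left j) ⊗ₜ[ℂ] σH.st ((r2 i).right j) :=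
              σH.st_comul (r.right i) ((r2 i).index) (r2 i).left (r2 i).right ((r2 i).eq.symm)
            have hii : ∑ j ∈ (r2 i).index,
                Sinv (σH.st ((r2 i).right j)) * σH.st ((r2 i).left j)
                = Coalgebra.counit (R := ℂ) (σH.st (r.right i)) • (1 : H) :=
              sum_sinv_mul Sinv hSinv₁ hSinv₂ ⟨(r2 i).index, fun j => σH.st ((r2 i).left j),
                fun j => σH.st ((r2 i).right j), hrep2.symm⟩
            rw [← LinearMap.sum_apply, ← map_sum, hii, map_smul, LinearMap.smul_apply,
              hlp.tri_one_act]
        _ = σA.st (tri x a) := by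
            have hx : ∑ i ∈ r.index,
                (starRingEnd ℂ) (Coalgebra.counit (R := ℂ) (σH.st (r.right i))) • r.left i
                = x := by
              have h5 : σH.st (∑ i ∈ r.index,
                  (starRingEnd ℂ) (Coalgebra.counit (R := ℂ) (σH.st (r.right i))) • r.left i)
                  = σH.st x := by
                rw [σH.st_sum]
                calc ∑ i ∈ r.index, σH.st
                      ((starRingEnd ℂ) (Coalgebra.counit (R := ℂ) (σH.st (r.right i))) • r.left i)
                    = ∑ i ∈ r.index,
                        Coalgebra.counit (R := ℂ) (σH.st (r.right i)) • σH.st (r.left i) := by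
                      refine Finset.sum_congr rfl fun i _ => ?_
                      rw [σH.st_smul, Complex.conj_conj]
                  _ = σH.st x := htwo
              calc ∑ i ∈ r.index,
                    (starRingEnd ℂ) (Coalgebra.counit (R := ℂ) (σH.st (r.right i))) • r.left i
                  = σH.st (σH.st (∑ i ∈ r.index,
                      (starRingEnd ℂ) (Coalgebra.counit (R := ℂ) (σH.st (r.right i))) • r.left i)) :=
                    (σH.st_invol _).symm
                _ = σH.st (σH.st x) := by rw [h5]
                _ = x := σH.st_invol x
            calc ∑ i ∈ r.index, Coalgebra.counit (R := ℂ) (σH.st (r.right i)) •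
                  σA.st (tri (r.left i) a)
                = ∑ i ∈ r.index, σA.st
                    ((starRingEnd ℂ) (Coalgebra.counit (R := ℂ) (σH.st (r.right i))) •
                      tri (r.left i) a) := by
                  refine Finset.sum_congr rfl fun i _ => ?_
                  rw [σA.st_smul, Complex.conj_conj]
              _ = σA.st (∑ i ∈ r.index,
                    (starRingEnd ℂ) (Coalgebra.counit (R := ℂ) (σH.st (r.right i))) •
                      tri (r.left i) a) := (σA.st_sum _ _).symm
              _ = σA.st (tri (∑ i ∈ r.index,
                    (starRingEnd ℂ) (Coalgebra.counit (R := ℂ) (σH.st (r.right i))) •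
                      r.left i) a) := by
                  rw [map_sum, LinearMap.sum_apply]
                  exact congrArg σA.st (Finset.sum_congr rfl fun i _ => by
                    rw [map_smul, LinearMap.smul_apply]).symm
              _ = σA.st (tri x a) := by rw [hx]
    exact chain.symm
  · -- condition (2) implies condition (1)
    intro h2 x a ι s x1 x2 hrep
    have hstx : Coalgebra.comul (R := ℂ) (σH.st x)
        = ∑ i ∈ s, σH.st (x1 i) ⊗ₜ[ℂ] σH.st (x2 i) :=
      σH.st_comul x s x1 x2 hrep
    have hi : ∑ i ∈ s, σH.st (x2 i) * Sinv (σH.st (x1 i))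
        = Coalgebra.counit (R := ℂ) (σH.st x) • (1 : H) :=
      sum_mul_sinv Sinv hSinv₁ hSinv₂
        ⟨s, fun i => σH.st (x1 i), fun i => σH.st (x2 i), hstx.symm⟩
    calc ∑ i ∈ s, tri (σH.st (x2 i)) (σA.st (tri (x1 i) a))
        = ∑ i ∈ s, tri (σH.st (x2 i)) (tri (Sinv (σH.st (x1 i))) (σA.st a)) := by
          exact Finset.sum_congr rfl fun i _ => by rw [h2]
      _ = ∑ i ∈ s, tri (σH.st (x2 i) * Sinv (σH.st (x1 i))) (σA.st a) :=
          Finset.sum_congr rfl fun i _ => (hlp.tri_mul_act _ _ _).symm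
      _ = tri (∑ i ∈ s, σH.st (x2 i) * Sinv (σH.st (x1 i))) (σA.st a) := by
          rw [map_sum, LinearMap.sum_apply]
      _ = tri (Coalgebra.counit (R := ℂ) (σH.st x) • (1 : H)) (σA.st a) := by rw [hi]
      _ = Coalgebra.counit (R := ℂ) (σH.st x) • σA.st a := by
          rw [map_smul, LinearMap.smul_apply, hlp.tri_one_act]
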